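/- With ŵ(x,z,t) = − ∂/∂x ∫_{z_b(x)}^{z} u^N(x,z′,t) dz′ as in the context, for each layer α one has ∫_{z_{α−1/2}}^{z_{α+1/2}} ŵ dz = h_α ( k_α − z_α ∂_x u_α ) = − (h_α/2) ∂_x(h_α u_α) − h_α Σ_{j=1}^{α−1} ∂_x(h_j u_j) + h_α u_α ∂_x z_α = h_α w_α, i.e. the layer integral of ŵ equals h_α times the layer vertical velocity w_α := −(1/2)∂_x(h_α u_α) − Σ_{j=1}^{α−1} ∂_x(h_j u_j) + u_α ∂_x z_α. -/

import Mathlib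

open MeasureTheory

/-- ∂/∂x of a function of (x,t). -/
noncomputable def pdx (f : ℝ → ℝ → ℝ) (x t : ℝ) : ℝ := deriv (fun x' => f x' t) x

/-- Interface heights `z_{α+1/2} = z_b + Σ_{j=1}^α l_j H`. -/
noncomputable def zhalf (zb : ℝ → ℝ) (H : ℝ → ℝ → ℝ) (l : ℕ → ℝ) (α : ℕ) (x t : ℝ) : ℝ :=
  zb x + ∑ j ∈ Finset.Icc 1 α, l j * H x t

/-- Layer midpoints `z_α = (z_{α+1/2} + z_{α−1/2})/2`. -/
noncomputable def zc (zb : ℝ → ℝ) (H : ℝ → ℝ → ℝ) (l : ℕ → ℝ) (α : ℕ) (x t : ℝ) : ℝ :=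
  (zhalf zb H l α x t + zhalf zb H l (α - 1) x t) / 2

/-- The piecewise constant vertical velocity profile `u^N`. -/
noncomputable def uN (zb : ℝ → ℝ) (H : ℝ → ℝ → ℝ) (l : ℕ → ℝ) (u : ℕ → ℝ → ℝ → ℝ)
    (N : ℕ) (x z t : ℝ) : ℝ :=
  ∑ α ∈ Finset.Icc 1 N,
    Set.indicator (Set.Ioo (zhalf zb H l (α - 1) x t) (zhalf zb H l α x t))
      (fun _ => u α x t) z

/-- `ŵ(x,z,t) = −∂_x ∫_{z_b(x)}^z u^N(x,z′,t) dz′`. -/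
noncomputable def what (zb : ℝ → ℝ) (H : ℝ → ℝ → ℝ) (l : ℕ → ℝ) (u : ℕ → ℝ → ℝ → ℝ)
    (N : ℕ) (x z t : ℝ) : ℝ :=
  -deriv (fun x' => ∫ z' in (zb x')..z, uN zb H l u N x' z' t) x

/-- The recursively defined functions `k_α`. -/
noncomputable def kf (zb : ℝ → ℝ) (H : ℝ → ℝ → ℝ) (l : ℕ → ℝ) (u : ℕ → ℝ → ℝ → ℝ) :
    ℕ → ℝ → ℝ → ℝ
  | 0, _, _ => 0
  | 1, x, t => deriv (fun x' => zb x' * u 1 x' t) x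
  | α + 2, x, t => kf zb H l u (α + 1) x t
      + deriv (fun x' => zhalf zb H l (α + 1) x' t * (u (α + 2) x' t - u (α + 1) x' t)) x

lemma ind_full (a b p q c : ℝ) (hap : a ≤ p) (hpq : p ≤ q) (hqb : q ≤ b) :
    ∫ z in a..b, (Set.Ioo p q).indicator (fun _ => c) z = c * (q - p) := by
  rw [intervalIntegral.integral_of_le (by linarith),
    MeasureTheory.setIntegral_indicator measurableSet_Ioo]
  have : Set.Ioc a b ∩ Set.Ioo p q = Set.Ioo p q := by
    ext z; simp only [Set.mem_inter_iff, Set.mem_Ioc, Set.mem_Ioo]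
    exact ⟨fun h => h.2, fun ⟨h1, h2⟩ => ⟨⟨by linarith, by linarith⟩, h1, h2⟩⟩
  rw [this, setIntegral_const, Real.volume_real_Ioo_of_le (by linarith), smul_eq_mul]
  ring

lemma ind_partial (a b p q c : ℝ) (hap : a ≤ p) (hpb : p ≤ b) (hbq : b ≤ q) :
    ∫ z in a..b, (Set.Ioo p q).indicator (fun _ => c) z = c * (b - p) := by
  rw [intervalIntegral.integral_of_le (by linarith),
    MeasureTheory.setIntegral_indicator measurableSet_Ioo]
  rcases eq_or_lt_of_le hbq with h | h
  · have : Set.Ioc a b ∩ Set.Ioo p q = Set.Ioo p b := by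
      ext z; simp only [Set.mem_inter_iff, Set.mem_Ioc, Set.mem_Ioo]
      constructor
      · rintro ⟨⟨_, h2⟩, h3, h4⟩; exact ⟨h3, by linarith⟩
      · rintro ⟨h1, h2⟩; exact ⟨⟨by linarith, by linarith⟩, h1, by linarith⟩
    rw [this, setIntegral_const, Real.volume_real_Ioo_of_le (by linarith), smul_eq_mul]; ring
  · have : Set.Ioc a b ∩ Set.Ioo p q = Set.Ioc p b := by
      ext z; simp only [Set.mem_inter_iff, Set.mem_Ioc, Set.mem_Ioo]
      constructor
      · rintro ⟨⟨_, h2⟩, h3, _⟩; exact ⟨h3, h2⟩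
      · rintro ⟨h1, h2⟩; exact ⟨⟨by linarith, h2⟩, h1, by linarith⟩
    rw [this, setIntegral_const, Real.volume_real_Ioc_of_le (by linarith), smul_eq_mul]; ring

lemma ind_empty (a b p q c : ℝ) (hab : a ≤ b) (hbp : b ≤ p) :
    ∫ z in a..b, (Set.Ioo p q).indicator (fun _ => c) z = 0 := by
  rw [intervalIntegral.integral_of_le hab,
    MeasureTheory.setIntegral_indicator measurableSet_Ioo]
  have : Set.Ioc a b ∩ Set.Ioo p q = ∅ := by
    ext z; simp only [Set.mem_inter_iff, Set.mem_Ioc, Set.mem_Ioo, Set.mem_empty_iff_false,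
      iff_false, not_and]
    rintro ⟨_, h2⟩ h3; linarith
  rw [this]; simp

lemma my_integral_id (a b : ℝ) : ∫ x in a..b, x = (b ^ 2 - a ^ 2) / 2 := by simp

lemma ind_intble (p q c a b : ℝ) :
    IntervalIntegrable ((Set.Ioo p q).indicator fun _ => c) volume a b := by
  apply MeasureTheory.Integrable.intervalIntegrable
  rw [MeasureTheory.integrable_indicator_iff measurableSet_Ioo]
  exact integrableOn_const measure_Ioo_lt_top.ne

/-- the layer integral of `ŵ` equals `h_α(k_α − z_α ∂_x u_α)`, which equals
`−(h_α/2)∂_x(h_α u_α) − h_α Σ_{j<α} ∂_x(h_j u_j) + h_α u_α ∂_x z_α = h_α w_α`. -/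
theorem stmt12 (N : ℕ) (hN : 1 ≤ N) (l : ℕ → ℝ)
    (hl : ∀ j ∈ Finset.Icc 1 N, 0 < l j) (hlsum : ∑ j ∈ Finset.Icc 1 N, l j = 1)
    (zb : ℝ → ℝ) (H : ℝ → ℝ → ℝ)
    (hzb : ContDiff ℝ (⊤ : ℕ∞) zb)
    (hH : ContDiff ℝ (⊤ : ℕ∞) (fun q : ℝ × ℝ => H q.1 q.2))
    (hHpos : ∀ x t : ℝ, 0 < H x t)
    (u : ℕ → ℝ → ℝ → ℝ)
    (hu : ∀ α, ContDiff ℝ (⊤ : ℕ∞) (fun q : ℝ × ℝ => u α q.1 q.2)) :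
    ∀ α ∈ Finset.Icc 1 N, ∀ x t : ℝ,
      (∫ z in (zhalf zb H l (α - 1) x t)..(zhalf zb H l α x t), what zb H l u N x z t)
          = l α * H x t * (kf zb H l u α x t
              - zc zb H l α x t * deriv (fun x' => u α x' t) x)
      ∧ (∫ z in (zhalf zb H l (α - 1) x t)..(zhalf zb H l α x t), what zb H l u N x z t)
          = -(l α * H x t / 2) * pdx (fun x' t' => l α * H x' t' * u α x' t') x t
            - l α * H x t
                * ∑ j ∈ Finset.Icc 1 (α - 1), pdx (fun x' t' => l j * H x' t' * u j x' t') x t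
            + l α * H x t * u α x t * pdx (zc zb H l α) x t
      ∧ (∫ z in (zhalf zb H l (α - 1) x t)..(zhalf zb H l α x t), what zb H l u N x z t)
          = l α * H x t
              * (-(1 / 2) * pdx (fun x' t' => l α * H x' t' * u α x' t') x t
                - (∑ j ∈ Finset.Icc 1 (α - 1),
                    pdx (fun x' t' => l j * H x' t' * u j x' t') x t)
                + u α x t * pdx (zc zb H l α) x t) := by
  intro α hα x t
  have hzbd : Differentiable ℝ zb := hzb.differentiable (by simp)
  have hHd : Differentiable ℝ (fun x' => H x' t) :=
    (hH.comp (contDiff_id.prodMk contDiff_const)).differentiable (by simp)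
  have hud : ∀ j, Differentiable ℝ (fun x' => u j x' t) := fun j =>
    ((hu j).comp (contDiff_id.prodMk contDiff_const)).differentiable (by simp)
  -- zhalf rewriting
  have hZeq : ∀ j, (fun x' => zhalf zb H l j x' t)
      = fun x' => zb x' + (∑ i ∈ Finset.Icc 1 j, l i) * H x' t := by
    intro j; funext x'; simp [zhalf, Finset.sum_mul]
  have hZd : ∀ j, Differentiable ℝ (fun x' => zhalf zb H l j x' t) := by
    intro j; rw [hZeq j]; exact hzbd.add ((differentiable_const _).mul hHd)
  have hZ0 : ∀ x', zhalf zb H l 0 x' t = zb x' := by intro x'; simp [zhalf]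
  have hgap : ∀ (j : ℕ) (x' : ℝ), zhalf zb H l (j + 1) x' t
      = zhalf zb H l j x' t + l (j + 1) * H x' t := by
    intro j x'
    simp only [zhalf, Finset.sum_Icc_succ_top (Nat.one_le_iff_ne_zero.mpr (Nat.succ_ne_zero j))]
    ring
  have hZmono : ∀ i j, i ≤ j → j ≤ N → ∀ x', zhalf zb H l i x' t ≤ zhalf zb H l j x' t := by
    intro i j hij hjN x'
    have hS : (∑ k ∈ Finset.Icc 1 i, l k) ≤ ∑ k ∈ Finset.Icc 1 j, l k := by
      apply Finset.sum_le_sum_of_subset_of_nonneg (Finset.Icc_subset_Icc_right hij)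
      intro k hk _
      exact (hl k (Finset.mem_Icc.2 ⟨(Finset.mem_Icc.1 hk).1,
        le_trans (Finset.mem_Icc.1 hk).2 hjN⟩)).le
    rw [congrFun (hZeq i) x', congrFun (hZeq j) x']
    have := (hHpos x' t).le
    nlinarith

  have hInt : ∀ (p q c a b : ℝ),
      IntervalIntegrable ((Set.Ioo p q).indicator fun _ => c) volume a b :=
    fun p q c a b => ind_intble p q c a b
  have step1 : ∀ β, β + 1 ≤ N → ∀ x' z, zhalf zb H l β x' t < z →
      z < zhalf zb H l (β+1) x' t →
      (∫ z' in (zb x')..z, uN zb H l u N x' z' t)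
        = (∑ j ∈ Finset.Icc 1 β, l j * H x' t * u j x' t)
          + (z - zhalf zb H l β x' t) * u (β+1) x' t := by
    intro β hβN x' z hz1 hz2
    have hzbz : zb x' < z := lt_of_le_of_lt
      (by rw [← hZ0 x']; exact hZmono 0 β (Nat.zero_le _) (by omega) x') hz1
    have hexp : (∫ z' in (zb x')..z, uN zb H l u N x' z' t)
        = ∑ j ∈ Finset.Icc 1 N, ∫ z' in (zb x')..z,
            (Set.Ioo (zhalf zb H l (j-1) x' t) (zhalf zb H l j x' t)).indicator
              (fun _ => u j x' t) z' := by
      simp only [uN]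
      exact intervalIntegral.integral_finset_sum (fun j _ => ind_intble _ _ _ _ _)
    rw [hexp]
    have hzero : ∀ j ∈ Finset.Icc 1 N, j ∉ Finset.Icc 1 (β+1) →
        (∫ z' in (zb x')..z,
          (Set.Ioo (zhalf zb H l (j-1) x' t) (zhalf zb H l j x' t)).indicator
            (fun _ => u j x' t) z') = 0 := by
      intro j hj hj2
      simp only [Finset.mem_Icc] at hj hj2
      apply ind_empty _ _ _ _ _ hzbz.le
      calc z ≤ zhalf zb H l (β+1) x' t := hz2.le
        _ ≤ zhalf zb H l (j-1) x' t := hZmono (β+1) (j-1) (by omega) (by omega) x'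
    rw [← Finset.sum_subset (Finset.Icc_subset_Icc_right hβN) hzero]
    rw [Finset.sum_Icc_succ_top (by omega : 1 ≤ β + 1)]
    congr 1
    · apply Finset.sum_congr rfl
      intro j hj
      simp only [Finset.mem_Icc] at hj
      obtain ⟨γ, rfl⟩ : ∃ γ, j = γ + 1 := ⟨j - 1, by omega⟩
      rw [show γ + 1 - 1 = γ from rfl]
      have h1 : zb x' ≤ zhalf zb H l γ x' t := by
        rw [← hZ0 x']; exact hZmono 0 γ (Nat.zero_le _) (by omega) x'
      have h2 : zhalf zb H l γ x' t ≤ zhalf zb H l (γ+1) x' t :=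
        hZmono γ (γ+1) (by omega) (by omega) x'
      have h3 : zhalf zb H l (γ+1) x' t ≤ z :=
        le_trans (hZmono _ _ (by omega) (by omega) x') hz1.le
      rw [ind_full _ _ _ _ _ h1 h2 h3, hgap γ x']
      ring
    · rw [show β + 1 - 1 = β from rfl]
      have h1 : zb x' ≤ zhalf zb H l β x' t := by
        rw [← hZ0 x']; exact hZmono 0 β (Nat.zero_le _) (by omega) x'
      rw [ind_partial _ _ _ _ _ h1 hz1.le hz2.le]
      ring
  have step2 : ∀ (x : ℝ) (β : ℕ), β + 1 ≤ N →
      ∀ z ∈ Set.Ioo (zhalf zb H l β x t) (zhalf zb H l (β+1) x t),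
      what zb H l u N x z t
        = -(∑ j ∈ Finset.Icc 1 β, deriv (fun x' => l j * H x' t * u j x' t) x)
          + deriv (fun x' => zhalf zb H l β x' t) x * u (β+1) x t
          + (zhalf zb H l β x t - z) * deriv (fun x' => u (β+1) x' t) x := by
    intro x β hβN z hz
    obtain ⟨hz1, hz2⟩ := hz
    have hev : (fun x' => ∫ z' in (zb x')..z, uN zb H l u N x' z' t)
        =ᶠ[nhds x] fun x' => (∑ j ∈ Finset.Icc 1 β, l j * H x' t * u j x' t)
          + (z - zhalf zb H l β x' t) * u (β+1) x' t := by
      have e1 : ∀ᶠ x' in nhds x, zhalf zb H l β x' t < z :=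
        ContinuousAt.eventually_lt ((hZd β).continuous.continuousAt) continuousAt_const hz1
      have e2 : ∀ᶠ x' in nhds x, z < zhalf zb H l (β+1) x' t :=
        ContinuousAt.eventually_lt continuousAt_const
          ((hZd (β+1)).continuous.continuousAt) hz2
      filter_upwards [e1, e2] with x' h1 h2
      exact step1 β hβN x' z h1 h2
    have hd1 : HasDerivAt (fun x' => ∑ j ∈ Finset.Icc 1 β, l j * H x' t * u j x' t)
        (∑ j ∈ Finset.Icc 1 β, deriv (fun x' => l j * H x' t * u j x' t) x) x := by
      apply HasDerivAt.fun_sum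
      intro j _
      exact (((differentiable_const (l j)).mul hHd).mul (hud j) x).hasDerivAt
    have hd2 : HasDerivAt (fun x' => (z - zhalf zb H l β x' t) * u (β+1) x' t)
        ((0 - deriv (fun x' => zhalf zb H l β x' t) x) * u (β+1) x t
          + (z - zhalf zb H l β x t) * deriv (fun x' => u (β+1) x' t) x) x :=
      (((hasDerivAt_const x z).sub (hZd β x).hasDerivAt).mul (hud (β+1) x).hasDerivAt)
    rw [what, hev.deriv_eq, (hd1.fun_add hd2).deriv]
    ring
  have step3 : ∀ (x : ℝ) (β : ℕ), β + 1 ≤ N →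
      (∫ z in (zhalf zb H l β x t)..(zhalf zb H l (β+1) x t), what zb H l u N x z t)
        = l (β+1) * H x t *
          (-(∑ j ∈ Finset.Icc 1 β, deriv (fun x' => l j * H x' t * u j x' t) x)
            + deriv (fun x' => zhalf zb H l β x' t) x * u (β+1) x t
            + (zhalf zb H l β x t
                - (zhalf zb H l β x t + zhalf zb H l (β+1) x t)/2)
                * deriv (fun x' => u (β+1) x' t) x) := by
    intro x β hβN
    have hab : zhalf zb H l β x t ≤ zhalf zb H l (β+1) x t :=
      hZmono β (β+1) (by omega) hβN x
    have hcong : (∫ z in (zhalf zb H l β x t)..(zhalf zb H l (β+1) x t),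
          what zb H l u N x z t)
        = ∫ z in (zhalf zb H l β x t)..(zhalf zb H l (β+1) x t),
            ((-(∑ j ∈ Finset.Icc 1 β, deriv (fun x' => l j * H x' t * u j x' t) x)
              + deriv (fun x' => zhalf zb H l β x' t) x * u (β+1) x t
              + zhalf zb H l β x t * deriv (fun x' => u (β+1) x' t) x)
              - z * deriv (fun x' => u (β+1) x' t) x) := by
      apply intervalIntegral.integral_congr_ae
      have hbz : ∀ᵐ z : ℝ, z ≠ zhalf zb H l (β+1) x t := by
        have hv : volume ({zhalf zb H l (β+1) x t} : Set ℝ) = 0 := Real.volume_singleton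
        exact (MeasureTheory.ae_iff).2 (by simpa using hv)
      filter_upwards [hbz] with z hzb hmem
      rw [Set.uIoc_of_le hab] at hmem
      have := step2 x β hβN z ⟨hmem.1, lt_of_le_of_ne hmem.2 hzb⟩
      rw [this]; ring
    rw [hcong, intervalIntegral.integral_sub intervalIntegrable_const
      ((continuous_id'.fun_mul continuous_const).intervalIntegrable _ _),
      intervalIntegral.integral_mul_const, my_integral_id,
      intervalIntegral.integral_const, smul_eq_mul]
    have hba : zhalf zb H l (β+1) x t - zhalf zb H l β x t = l (β+1) * H x t := by
      rw [hgap β x]; ring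
    rw [← hba]
    ring
  -- step 4 : closed form of kf
  have step4 : ∀ (γ : ℕ), kf zb H l u (γ+1) x t
      = deriv (fun x' => zhalf zb H l γ x' t * u (γ+1) x' t) x
        - ∑ j ∈ Finset.Icc 1 γ, deriv (fun x' => l j * H x' t * u j x' t) x := by
    intro γ
    induction γ with
    | zero =>
      have he : (fun x' => zhalf zb H l 0 x' t * u 1 x' t)
          = fun x' => zb x' * u 1 x' t := by
        funext x'; rw [hZ0]
      show deriv (fun x' => zb x' * u 1 x' t) x = _
      rw [he]; simp
    | succ γ ih =>
      show kf zb H l u (γ + 1) x t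
          + deriv (fun x' => zhalf zb H l (γ + 1) x' t
              * (u (γ + 2) x' t - u (γ + 1) x' t)) x = _
      rw [ih, Finset.sum_Icc_succ_top (by omega : (1:ℕ) ≤ γ + 1)]
      have hfe : (fun x' => zhalf zb H l (γ+1) x' t * u (γ+2) x' t)
          = fun x' => zhalf zb H l γ x' t * u (γ+1) x' t
            + zhalf zb H l (γ+1) x' t * (u (γ+2) x' t - u (γ+1) x' t)
            + l (γ+1) * H x' t * u (γ+1) x' t := by
        funext x'; rw [hgap γ x']; ring
      have hD : deriv (fun x' => zhalf zb H l γ x' t * u (γ+1) x' t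
            + zhalf zb H l (γ+1) x' t * (u (γ+2) x' t - u (γ+1) x' t)
            + l (γ+1) * H x' t * u (γ+1) x' t) x
          = deriv (fun x' => zhalf zb H l γ x' t * u (γ+1) x' t) x
            + deriv (fun x' => zhalf zb H l (γ+1) x' t
                * (u (γ+2) x' t - u (γ+1) x' t)) x
            + deriv (fun x' => l (γ+1) * H x' t * u (γ+1) x' t) x :=
        ((((hZd γ).mul (hud (γ+1)) x).hasDerivAt.add
          (((hZd (γ+1)).mul ((hud (γ+2)).sub (hud (γ+1))) x).hasDerivAt)).add
          ((((differentiable_const _).mul hHd).mul (hud (γ+1)) x).hasDerivAt)).deriv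
      rw [hfe, hD]
      ring
  -- assembly
  obtain ⟨hα1, hαN⟩ := Finset.mem_Icc.1 hα
  obtain ⟨β, rfl⟩ : ∃ β, α = β + 1 := ⟨α - 1, by omega⟩
  have hβN : β + 1 ≤ N := hαN
  simp only [Nat.add_sub_cancel, pdx]
  have hI := step3 x β hβN
  have hk := step4 β
  have hP : deriv (fun x' => zhalf zb H l β x' t * u (β+1) x' t) x
      = deriv (fun x' => zhalf zb H l β x' t) x * u (β+1) x t
        + zhalf zb H l β x t * deriv (fun x' => u (β+1) x' t) x :=
    ((hZd β x).hasDerivAt.mul (hud (β+1) x).hasDerivAt).deriv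
  have hzcv : zc zb H l (β+1) x t
      = (zhalf zb H l (β+1) x t + zhalf zb H l β x t) / 2 := by
    simp [zc]
  have hzcd : DifferentiableAt ℝ (fun x' => zc zb H l (β+1) x' t) x := by
    have he : (fun x' => zc zb H l (β+1) x' t)
        = fun x' => (zhalf zb H l (β+1) x' t + zhalf zb H l β x' t) / 2 := by
      funext x'; simp [zc]
    rw [he]
    exact (((hZd (β+1)).add (hZd β)).div_const 2) x
  have hP2 : deriv (fun x' => zhalf zb H l β x' t * u (β+1) x' t) x
      = deriv (fun x' => zc zb H l (β+1) x' t) x * u (β+1) x t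
        + ((zhalf zb H l (β+1) x t + zhalf zb H l β x t) / 2)
            * deriv (fun x' => u (β+1) x' t) x
        - deriv (fun x' => l (β+1) * H x' t * u (β+1) x' t) x / 2 := by
    have he : (fun x' => zhalf zb H l β x' t * u (β+1) x' t)
        = fun x' => zc zb H l (β+1) x' t * u (β+1) x' t
            - l (β+1) * H x' t * u (β+1) x' t / 2 := by
      funext x'
      have h1 : zc zb H l (β+1) x' t
          = (zhalf zb H l (β+1) x' t + zhalf zb H l β x' t) / 2 := by simp [zc]
      rw [h1, hgap β x']; ring
    rw [he, ← hzcv]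
    exact ((hzcd.hasDerivAt.mul (hud (β+1) x).hasDerivAt).sub
      (((((differentiable_const _).mul hHd).mul (hud (β+1)) x).hasDerivAt).div_const 2)).deriv
  refine ⟨?_, ?_, ?_⟩
  · rw [hzcv]
    linear_combination hI - (l (β+1) * H x t) * hk - (l (β+1) * H x t) * hP
  · linear_combination hI - (l (β+1) * H x t) * hP + (l (β+1) * H x t) * hP2
  · linear_combination hI - (l (β+1) * H x t) * hP + (l (β+1) * H x t) * hP2
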